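/- Let W : [0,1] → ℝ be continuous and suppose that for every ε > 0 and θ > 0 there exist δ ∈ (0, ε) and s, t ∈ [0,1] with |s − t| < δ and |W(s) − W(t)| ≥ (√2 − θ)·(δ·log(1/δ))^{1/2}. Then there is no n₀ such that for all n ≥ n₀ there exists x ∈ {±1}^n with sup_{t∈[0,1]} |W(t) − ℓ_x(t)| ≤ (1/2)·√((log n)/n). -/

import Mathlib

open Finset

/-- The scaled linear interpolation of the partial sums of `x`. -/
noncomputable def ell (n : ℕ) (x : ℕ → ℝ) (t : ℝ) : ℝ :=
  (∑ i ∈ Finset.range ⌊t * n⌋₊, x i) / Real.sqrt n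
    + (t * n - ⌊t * n⌋₊) * x ⌊t * n⌋₊ / Real.sqrt n

lemma ell_incr_le (n : ℕ) (hn : 1 ≤ n) (x : ℕ → ℝ) (hx : ∀ i < n, |x i| ≤ 1)
    (s t : ℝ) (hs : s ∈ Set.Icc (0:ℝ) 1) (ht : t ∈ Set.Icc (0:ℝ) 1)
    (hst0 : s ≤ t) (hst : t - s ≤ 2 / n) :
    |ell n x t - ell n x s| ≤ 4 / Real.sqrt n := by
  have hn0 : (0:ℝ) < n := by exact_mod_cast hn
  set a := s * n with ha_def
  set b := t * n with hb_def
  have ha0 : 0 ≤ a := mul_nonneg hs.1 hn0.le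
  have hb0 : 0 ≤ b := mul_nonneg ht.1 hn0.le
  have hab : a ≤ b := mul_le_mul_of_nonneg_right hst0 hn0.le
  have hba : b ≤ a + 2 := by
    have := mul_le_mul_of_nonneg_right hst hn0.le
    rw [div_mul_cancel₀] at this
    · nlinarith
    · exact hn0.ne'
  have hbn : b ≤ n := by
    have := mul_le_mul_of_nonneg_right ht.2 hn0.le
    simpa using this
  set k := ⌊a⌋₊ with hk_def
  set m := ⌊b⌋₊ with hm_def
  have hkm : k ≤ m := Nat.floor_le_floor hab
  have hmk2 : m ≤ k + 2 := by
    have h2 : b ≤ a + ((2:ℕ):ℝ) := by push_cast; linarith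
    have := Nat.floor_le_floor h2
    rwa [Nat.floor_add_natCast ha0 2] at this
  have hmn : m ≤ n := by
    have := Nat.floor_le_floor hbn
    simpa using this
  have hak : (k:ℝ) ≤ a := Nat.floor_le ha0
  have hak1 : a < k + 1 := Nat.lt_floor_add_one a
  have hbm : (m:ℝ) ≤ b := Nat.floor_le hb0
  have hbm1 : b < m + 1 := Nat.lt_floor_add_one b
  -- bound the two fractional terms
  have hterm : ∀ (c : ℝ) (j : ℕ), (j:ℝ) ≤ c → c < j + 1 → c ≤ n → j ≤ n →
      |(c - j) * x j| ≤ 1 := by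
    intro c j h1 h2 h3 h4
    rcases eq_or_lt_of_le h4 with hje | hjl
    · have : c = j := by
        subst hje
        push_cast at h1 ⊢
        linarith
      simp [this]
    · have hxj := hx j hjl
      rw [abs_mul]
      have h5 : |c - (j:ℝ)| ≤ 1 := by rw [abs_le]; constructor <;> linarith
      calc |c - (j:ℝ)| * |x j| ≤ 1 * 1 := by
            exact mul_le_mul h5 hxj (abs_nonneg _) zero_le_one
        _ = 1 := by ring
  have htk : |(a - k) * x k| ≤ 1 := hterm a k hak hak1 (le_trans hab hbn) (le_trans hkm hmn)
  have htm : |(b - m) * x m| ≤ 1 := hterm b m hbm hbm1 hbn hmn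
  -- bound the sum difference
  have hsum : |∑ i ∈ Finset.range m, x i - ∑ i ∈ Finset.range k, x i| ≤ 2 := by
    rw [← Finset.sum_Ico_eq_sub x hkm]
    calc |∑ i ∈ Finset.Ico k m, x i| ≤ ∑ i ∈ Finset.Ico k m, |x i| :=
          Finset.abs_sum_le_sum_abs _ _
      _ ≤ ∑ _i ∈ Finset.Ico k m, (1:ℝ) := by
          apply Finset.sum_le_sum
          intro i hi
          exact hx i (lt_of_lt_of_le (Finset.mem_Ico.mp hi).2 hmn)
      _ = (m - k : ℕ) := by simp
      _ ≤ 2 := by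
          have : m - k ≤ 2 := by omega
          exact_mod_cast this
  have hsq : (0:ℝ) < Real.sqrt n := Real.sqrt_pos.mpr hn0
  have hdiff : ell n x t - ell n x s =
      ((∑ i ∈ Finset.range m, x i - ∑ i ∈ Finset.range k, x i)
        + (b - m) * x m - (a - k) * x k) / Real.sqrt n := by
    simp only [ell, ← hb_def, ← ha_def, ← hk_def, ← hm_def]
    field_simp
    ring
  rw [hdiff, abs_div, abs_of_pos hsq]
  gcongr
  calc |∑ i ∈ Finset.range m, x i - ∑ i ∈ Finset.range k, x i + (b - ↑m) * x m - (a - ↑k) * x k|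
      ≤ |∑ i ∈ Finset.range m, x i - ∑ i ∈ Finset.range k, x i + (b - ↑m) * x m|
        + |(a - ↑k) * x k| := abs_sub _ _
    _ ≤ |∑ i ∈ Finset.range m, x i - ∑ i ∈ Finset.range k, x i| + |(b - ↑m) * x m|
        + |(a - ↑k) * x k| := by gcongr; exact abs_add_le _ _
    _ ≤ 4 := by linarith

lemma ell_incr (n : ℕ) (hn : 1 ≤ n) (x : ℕ → ℝ) (hx : ∀ i < n, |x i| ≤ 1)
    (s t : ℝ) (hs : s ∈ Set.Icc (0:ℝ) 1) (ht : t ∈ Set.Icc (0:ℝ) 1)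
    (hst : |s - t| ≤ 2 / n) : |ell n x s - ell n x t| ≤ 4 / Real.sqrt n := by
  rcases le_total s t with h | h
  · rw [abs_sub_comm]
    exact ell_incr_le n hn x hx s t hs ht h (by rw [abs_sub_comm, abs_of_nonneg (by linarith)] at hst; linarith)
  · exact ell_incr_le n hn x hx t s ht hs h (by rw [abs_of_nonneg (by linarith)] at hst; linarith)

lemma numeric_ineq {u : ℝ} (hu : 10000 ≤ u) :
    Real.sqrt u + 4 < 1.3 * Real.sqrt (u - Real.log 2) := by
  have hl2 : Real.log 2 < 1 := lt_trans Real.log_two_lt_d9 (by norm_num)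
  have hl2' : 0 < Real.log 2 := Real.log_pos (by norm_num)
  set a := Real.sqrt (u - Real.log 2) with ha
  set b := Real.sqrt u with hb
  have ha0 : 0 ≤ a := Real.sqrt_nonneg _
  have hb0 : 0 ≤ b := Real.sqrt_nonneg _
  have ha2 : a ^ 2 = u - Real.log 2 := Real.sq_sqrt (by linarith)
  have hb2 : b ^ 2 = u := Real.sq_sqrt (by linarith)
  have ha99 : (99:ℝ) ≤ a := by
    rw [ha, Real.le_sqrt (by norm_num) (by linarith)]
    norm_num
    linarith
  nlinarith [sq_nonneg (b - a - 1), sq_nonneg (b - a)]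

/-- a continuous `W` with Lévy-type large increments cannot be approximated
by `n`-step walks within `(1/2)√(log n / n)` for all large `n`. -/
theorem stmt8 (W : ℝ → ℝ) (hW : ContinuousOn W (Set.Icc 0 1))
    (hLevy : ∀ ε > (0:ℝ), ∀ θ > (0:ℝ), ∃ δ : ℝ, 0 < δ ∧ δ < ε ∧
      ∃ s ∈ Set.Icc (0:ℝ) 1, ∃ t ∈ Set.Icc (0:ℝ) 1, |s - t| < δ ∧
        (Real.sqrt 2 - θ) * Real.sqrt (δ * Real.log (1/δ)) ≤ |W s - W t|) :
    ¬ ∃ n₀ : ℕ, ∀ n : ℕ, n₀ ≤ n → ∃ x : ℕ → ℝ,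
      (∀ i < n, x i = 1 ∨ x i = -1) ∧
      ∀ t ∈ Set.Icc (0:ℝ) 1,
        |W t - ell n x t| ≤ (1/2) * Real.sqrt (Real.log n / n) := by
  rintro ⟨n₀, h⟩
  have hθ : (0:ℝ) < Real.sqrt 2 - 1.3 := by
    have : (1.3:ℝ) < Real.sqrt 2 := by
      rw [Real.lt_sqrt (by norm_num)]; norm_num
    linarith
  obtain ⟨δ, hδ0, hδε, s, hs, t, ht, hst, hIncr⟩ :=
    hLevy (Real.exp (-(10000 + n₀))) (Real.exp_pos _) (Real.sqrt 2 - 1.3) hθ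
  rw [show Real.sqrt 2 - (Real.sqrt 2 - 1.3) = 1.3 by ring] at hIncr
  set n := ⌈1/δ⌉₊ with hn_def
  have hinv : Real.exp (10000 + n₀) < 1/δ := by
    rw [lt_div_iff₀ hδ0]
    calc Real.exp (10000 + n₀) * δ < Real.exp (10000 + n₀) * Real.exp (-(10000 + n₀)) := by
          exact mul_lt_mul_of_pos_left hδε (Real.exp_pos _)
      _ = 1 := by rw [← Real.exp_add, add_neg_cancel, Real.exp_zero]
  have hN1 : (1:ℝ)/δ ≤ n := Nat.le_ceil _
  have hδ1 : δ < 1 := lt_of_lt_of_le hδε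
    (Real.exp_le_one_iff.mpr (neg_nonpos.mpr (by positivity)))
  have h1δ : (1:ℝ) ≤ 1/δ := by
    rw [le_div_iff₀ hδ0]
    nlinarith
  have hN2 : (n:ℝ) ≤ 2/δ := by
    have hc := Nat.ceil_lt_add_one (show (0:ℝ) ≤ 1/δ by positivity)
    have h2 : 2/δ = 1/δ + 1/δ := by ring
    rw [← hn_def] at hc
    linarith
  have hNbig : Real.exp (10000 + n₀) < (n:ℝ) := lt_of_lt_of_le hinv hN1
  have hn₀ : n₀ ≤ n := by
    have : (n₀:ℝ) < n := by
      have := Real.add_one_le_exp (10000 + (n₀:ℝ))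
      linarith
    exact_mod_cast this.le
  have hn1 : 1 ≤ n := by
    have : (1:ℝ) ≤ (n:ℝ) := le_trans h1δ hN1
    exact_mod_cast this
  have hN0 : (0:ℝ) < n := by exact_mod_cast hn1
  obtain ⟨x, hx, hApprox⟩ := h n hn₀
  have hx' : ∀ i < n, |x i| ≤ 1 := by
    intro i hi; rcases hx i hi with h' | h' <;> simp [h']
  have hδn : δ ≤ 2/(n:ℝ) := by
    rw [le_div_iff₀ hN0]
    calc δ * n ≤ δ * (2/δ) := by exact mul_le_mul_of_nonneg_left hN2 hδ0.le
      _ = 2 := by field_simp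
  have hincr_ell : |ell n x s - ell n x t| ≤ 4 / Real.sqrt n :=
    ell_incr n hn1 x hx' s t hs ht (by linarith)
  have hWs := hApprox s hs
  have hWt := hApprox t ht
  have hlogN : 10000 ≤ Real.log n := by
    have h1 : Real.log (Real.exp (10000 + n₀)) ≤ Real.log n :=
      Real.log_le_log (Real.exp_pos _) hNbig.le
    rw [Real.log_exp] at h1
    have : (0:ℝ) ≤ n₀ := Nat.cast_nonneg _
    linarith
  have key : 1.3 * Real.sqrt (δ * Real.log (1/δ)) ≤
      Real.sqrt (Real.log n / n) + 4 / Real.sqrt n := by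
    calc 1.3 * Real.sqrt (δ * Real.log (1/δ)) ≤ |W s - W t| := hIncr
      _ = |(W s - ell n x s) + (ell n x s - ell n x t) + (ell n x t - W t)| := by ring_nf
      _ ≤ |(W s - ell n x s) + (ell n x s - ell n x t)| + |ell n x t - W t| := abs_add_le _ _
      _ ≤ |W s - ell n x s| + |ell n x s - ell n x t| + |ell n x t - W t| := by
          gcongr; exact abs_add_le _ _
      _ ≤ (1/2) * Real.sqrt (Real.log n / n) + 4 / Real.sqrt n
          + (1/2) * Real.sqrt (Real.log n / n) := by
          rw [abs_sub_comm (ell n x t)]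
          exact add_le_add (add_le_add hWs hincr_ell) hWt
      _ = Real.sqrt (Real.log n / n) + 4 / Real.sqrt n := by ring
  have hlog2 : 0 ≤ Real.log n - Real.log 2 := by
    have := Real.log_two_lt_d9; linarith
  have hδlow : (Real.log n - Real.log 2)/n ≤ δ * Real.log (1/δ) := by
    have h1 : 1/(n:ℝ) ≤ δ := by
      rw [div_le_iff₀ hN0]
      have h' := mul_le_mul_of_nonneg_left hN1 hδ0.le
      rwa [mul_one_div, div_self hδ0.ne'] at h' 
    have h2 : Real.log n - Real.log 2 ≤ Real.log (1/δ) := by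
      have hh : (n:ℝ)/2 ≤ 1/δ := by
        rw [div_le_div_iff₀ (by norm_num) hδ0]
        rw [le_div_iff₀ hδ0] at hN2
        linarith
      calc Real.log n - Real.log 2 = Real.log ((n:ℝ)/2) :=
            (Real.log_div hN0.ne' two_ne_zero).symm
        _ ≤ Real.log (1/δ) := Real.log_le_log (by positivity) hh
    calc (Real.log n - Real.log 2)/n = (1/n) * (Real.log n - Real.log 2) := by ring
      _ ≤ δ * Real.log (1/δ) := mul_le_mul h1 h2 hlog2 hδ0.le
  have hfinal : 1.3 * Real.sqrt ((Real.log n - Real.log 2)/n) ≤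
      Real.sqrt (Real.log n / n) + 4 / Real.sqrt n := by
    exact le_trans (mul_le_mul_of_nonneg_left (Real.sqrt_le_sqrt hδlow) (by norm_num)) key
  rw [Real.sqrt_div hlog2 (n:ℝ), Real.sqrt_div (by linarith : (0:ℝ) ≤ Real.log n) (n:ℝ)]
    at hfinal
  have hsqn : 0 < Real.sqrt (n:ℝ) := Real.sqrt_pos.mpr hN0
  have hmain : 1.3 * Real.sqrt (Real.log n - Real.log 2) ≤ Real.sqrt (Real.log n) + 4 := by
    rw [← mul_div_assoc, ← add_div] at hfinal
    exact (div_le_div_iff_of_pos_right hsqn).mp hfinal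
  exact absurd hmain (not_le.mpr (numeric_ineq hlogN))
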